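/- Let (λ₁, λ₂) be a pair of random variables with joint density p(ℓ₁, ℓ₂) = Σ_{i=1}^p Σ_{ε=±1} φ(ℓ₁) q_{i,ε}(ℓ₂) 𝟙{0 ≤ ℓ₂ ≤ ℓ₁} (with respect to Lebesgue measure on ℝ²), where φ is the standard normal density and the q_{i,ε} are nonnegative integrable functions. Then the statistic S := Φ̄(λ₁)/Φ̄(λ₂) is uniformly distributed on [0,1]. -/

import Mathlib

open MeasureTheory Real Set

/-- Standard normal density. -/
noncomputable def phi (x : ℝ) : ℝ := (Real.sqrt (2 * Real.pi))⁻¹ * Real.exp (-x ^ 2 / 2)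

/-- Upper tail of the standard normal distribution. -/
noncomputable def Phibar (x : ℝ) : ℝ := ∫ t in Set.Ioi x, phi t

/-- Inverse of the upper tail function `Φ̄ : ℝ → (0,1)`. -/
noncomputable def PhibarInv : ℝ → ℝ := Function.invFun Phibar

/-- The function `h_α`. -/
noncomputable def halpha (α ℓ : ℝ) : ℝ := PhibarInv (α * Phibar ℓ) - ℓ

open scoped ENNReal

lemma phi_eq : phi = ProbabilityTheory.gaussianPDFReal 0 1 := by
  ext x
  simp [phi, ProbabilityTheory.gaussianPDFReal]

lemma phi_pos (x : ℝ) : 0 < phi x := by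
  unfold phi; positivity

lemma phi_le (x : ℝ) : phi x ≤ (Real.sqrt (2 * Real.pi))⁻¹ := by
  unfold phi
  have h1 : Real.exp (-x ^ 2 / 2) ≤ 1 := by
    rw [Real.exp_le_one_iff]
    nlinarith [sq_nonneg x]
  have h2 : (0:ℝ) ≤ (Real.sqrt (2 * Real.pi))⁻¹ := by positivity
  nlinarith

lemma integrable_phi : Integrable phi := by
  rw [phi_eq]; exact ProbabilityTheory.integrable_gaussianPDFReal 0 1

lemma integral_phi : ∫ x, phi x = 1 := by
  rw [phi_eq]; exact ProbabilityTheory.integral_gaussianPDFReal_eq_one 0 one_ne_zero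

lemma continuous_phi : Continuous phi := by
  unfold phi; fun_prop

lemma Phibar_pos (x : ℝ) : 0 < Phibar x := by
  rw [Phibar, setIntegral_pos_iff_support_of_nonneg_ae
    (ae_of_all _ fun t => (phi_pos t).le) integrable_phi.integrableOn]
  have : Function.support phi = Set.univ := by
    ext t; simp [Function.mem_support, (phi_pos t).ne']
  rw [this, Set.univ_inter, Real.volume_Ioi]
  simp

lemma Phibar_le_one (x : ℝ) : Phibar x ≤ 1 := by
  rw [Phibar, ← integral_phi]
  exact setIntegral_le_integral integrable_phi (ae_of_all _ fun t => (phi_pos t).le)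

lemma Phibar_split {x y : ℝ} (h : x ≤ y) :
    Phibar x = (∫ t in Set.Ioc x y, phi t) + Phibar y := by
  rw [Phibar, Phibar, ← Set.Ioc_union_Ioi_eq_Ioi h,
    setIntegral_union (Set.Ioc_disjoint_Ioi le_rfl) measurableSet_Ioi
      integrable_phi.integrableOn integrable_phi.integrableOn]

lemma Phibar_strictAnti : StrictAnti Phibar := by
  intro x y hxy
  rw [Phibar_split hxy.le]
  have h : 0 < ∫ t in Set.Ioc x y, phi t := by
    rw [setIntegral_pos_iff_support_of_nonneg_ae
      (ae_of_all _ fun t => (phi_pos t).le) integrable_phi.integrableOn]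
    have : Function.support phi = Set.univ := by
      ext t; simp [Function.mem_support, (phi_pos t).ne']
    rw [this, Set.univ_inter, Real.volume_Ioc]
    simp [hxy]
  linarith

lemma continuous_Phibar : Continuous Phibar := by
  have hC : (0:ℝ) ≤ (Real.sqrt (2 * Real.pi))⁻¹ := by positivity
  have key : ∀ {x y : ℝ}, x ≤ y →
      Phibar x - Phibar y ≤ (Real.sqrt (2 * Real.pi))⁻¹ * (y - x) := by
    intro x y h
    rw [Phibar_split h]
    have := norm_setIntegral_le_of_norm_le_const (μ := volume) (s := Set.Ioc x y)
      (f := phi) (C := (Real.sqrt (2 * Real.pi))⁻¹)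
      (by rw [Real.volume_Ioc]; exact ENNReal.ofReal_lt_top)
      (fun t _ => by rw [Real.norm_eq_abs, abs_of_pos (phi_pos t)]; exact phi_le t)
    rw [Real.volume_real_Ioc_of_le h] at this
    have h2 := le_trans (le_abs_self _) this
    linarith
  apply (LipschitzWith.of_dist_le_mul (K := ⟨(Real.sqrt (2 * Real.pi))⁻¹, hC⟩)
    (f := Phibar) ?_).continuous
  intro x y
  rcases le_total x y with h | h
  · rw [Real.dist_eq, Real.dist_eq, abs_of_nonneg (by linarith [Phibar_strictAnti.antitone h]),
      abs_of_nonpos (by linarith)]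
    have := key h
    show _ ≤ (Real.sqrt (2 * Real.pi))⁻¹ * _
    linarith
  · rw [Real.dist_eq, Real.dist_eq, abs_of_nonpos (by linarith [Phibar_strictAnti.antitone h]),
      abs_of_nonneg (by linarith)]
    have := key h
    show _ ≤ (Real.sqrt (2 * Real.pi))⁻¹ * _
    linarith

lemma tendsto_Phibar_atTop : Filter.Tendsto Phibar Filter.atTop (nhds 0) := by
  have h := tendsto_setIntegral_of_antitone (μ := volume) (f := phi) (ι := ℝ)
    (s := fun x => Set.Ioi x) (fun x => measurableSet_Ioi)
    (fun a b hab => Set.Ioi_subset_Ioi hab) ⟨0, integrable_phi.integrableOn⟩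
  have hempty : ⋂ x : ℝ, Set.Ioi x = (∅ : Set ℝ) := by
    ext z
    simp only [Set.mem_iInter, Set.mem_Ioi, Set.mem_empty_iff_false, iff_false, not_forall,
      not_lt]
    exact ⟨z, le_rfl⟩
  rw [hempty] at h
  simp at h
  exact h

lemma exists_Phibar_eq {y a : ℝ} (ha : 0 < a) (hay : a ≤ Phibar y) :
    ∃ x, y ≤ x ∧ Phibar x = a := by
  obtain ⟨M, hM⟩ := (tendsto_Phibar_atTop.eventually_lt_const ha).exists
  set M' := max M y with hM'
  have hyM : y ≤ M' := le_max_right _ _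
  have hMM : Phibar M' < a := lt_of_le_of_lt (Phibar_strictAnti.antitone (le_max_left _ _)) hM
  have := intermediate_value_Icc' hyM (continuous_Phibar.continuousOn)
  obtain ⟨x, hx, hfx⟩ := this ⟨hMM.le, hay⟩
  exact ⟨x, hx.1, hfx⟩

lemma lintegral_phi_Ici (c : ℝ) :
    ∫⁻ x in Set.Ici c, ENNReal.ofReal (phi x) = ENNReal.ofReal (Phibar c) := by
  rw [setLIntegral_congr (Ioi_ae_eq_Ici (μ := volume) (a := c)).symm,
    ← ofReal_integral_eq_lintegral_ofReal integrable_phi.integrableOn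
      (ae_of_all _ fun t => (phi_pos t).le)]
  rfl

lemma region_measurable : MeasurableSet {z : ℝ × ℝ | 0 ≤ z.2 ∧ z.2 ≤ z.1} := by
  apply MeasurableSet.inter
  · exact measurableSet_le measurable_const measurable_snd
  · exact measurableSet_le measurable_snd measurable_fst

lemma gset_measurable (t : ℝ) : MeasurableSet {z : ℝ × ℝ | Phibar z.1 / Phibar z.2 ≤ t} := by
  have hg : Continuous fun z : ℝ × ℝ => Phibar z.1 / Phibar z.2 :=
    (continuous_Phibar.comp continuous_fst).div (continuous_Phibar.comp continuous_snd)
      fun z => (Phibar_pos _).ne'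
  exact measurableSet_le hg.measurable measurable_const

lemma calc_aux (q0 : ℝ → ℝ) (hq0 : ∀ x, 0 ≤ q0 x)
    (hq0m : AEMeasurable (fun z : ℝ × ℝ => q0 z.2) (volume : Measure (ℝ × ℝ)))
    {t : ℝ} (ht : 0 < t) (ht1 : t ≤ 1) :
    ∫⁻ z in {z : ℝ × ℝ | Phibar z.1 / Phibar z.2 ≤ t} ∩ {z : ℝ × ℝ | 0 ≤ z.2 ∧ z.2 ≤ z.1},
        ENNReal.ofReal (phi z.1 * q0 z.2)
      = ENNReal.ofReal t *
          ∫⁻ y in Set.Ici 0, ENNReal.ofReal (Phibar y) * ENNReal.ofReal (q0 y) := by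
  set E := {z : ℝ × ℝ | Phibar z.1 / Phibar z.2 ≤ t} ∩ {z : ℝ × ℝ | 0 ≤ z.2 ∧ z.2 ≤ z.1}
    with hE
  have hEmeas : MeasurableSet E := (gset_measurable t).inter region_measurable
  have hFmeas : AEMeasurable
      (E.indicator fun z : ℝ × ℝ => ENNReal.ofReal (phi z.1 * q0 z.2))
      (volume : Measure (ℝ × ℝ)) := by
    apply AEMeasurable.indicator _ hEmeas
    have h1 : Measurable fun z : ℝ × ℝ => phi z.1 :=
      (continuous_phi.comp continuous_fst).measurable
    exact ENNReal.measurable_ofReal.comp_aemeasurable (h1.aemeasurable.mul hq0m)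
  rw [← lintegral_indicator hEmeas]
  rw [Measure.volume_eq_prod] at hFmeas ⊢
  rw [lintegral_prod_symm _ hFmeas]
  have key : ∀ y : ℝ,
      (∫⁻ x, E.indicator (fun z : ℝ × ℝ => ENNReal.ofReal (phi z.1 * q0 z.2)) (x, y))
        = (Set.Ici (0:ℝ)).indicator
            (fun y => ENNReal.ofReal t * (ENNReal.ofReal (Phibar y) * ENNReal.ofReal (q0 y)))
            y := by
    intro y
    by_cases hy : 0 ≤ y
    · obtain ⟨c, hcy, hc⟩ := exists_Phibar_eq (mul_pos ht (Phibar_pos y))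
        (mul_le_of_le_one_left (Phibar_pos y).le ht1)
      have hsect : ∀ x : ℝ, (x, y) ∈ E ↔ x ∈ Set.Ici c := by
        intro x
        simp only [hE, Set.mem_inter_iff, Set.mem_setOf_eq, Set.mem_Ici]
        constructor
        · rintro ⟨h1, -, h3⟩
          rw [div_le_iff₀ (Phibar_pos y), ← hc] at h1
          exact (Phibar_strictAnti.le_iff_ge).mp h1
        · intro hcx
          have h1 : Phibar x ≤ Phibar c := Phibar_strictAnti.antitone hcx
          refine ⟨?_, hy, le_trans hcy hcx⟩
          rw [div_le_iff₀ (Phibar_pos y)]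
          rw [hc] at h1; exact h1
      have : ∀ x : ℝ,
          E.indicator (fun z : ℝ × ℝ => ENNReal.ofReal (phi z.1 * q0 z.2)) (x, y)
            = (Set.Ici c).indicator
                (fun x => ENNReal.ofReal (phi x) * ENNReal.ofReal (q0 y)) x := by
        intro x
        rw [Set.indicator_apply, Set.indicator_apply, if_congr (hsect x) rfl rfl]
        simp [ENNReal.ofReal_mul (phi_pos x).le]
      rw [lintegral_congr this, lintegral_indicator measurableSet_Ici,
        lintegral_mul_const _ continuous_phi.measurable.ennreal_ofReal,
        lintegral_phi_Ici, hc, ENNReal.ofReal_mul ht.le,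
        Set.indicator_of_mem (Set.mem_Ici.2 hy)]
      ring
    · have : ∀ x : ℝ,
          E.indicator (fun z : ℝ × ℝ => ENNReal.ofReal (phi z.1 * q0 z.2)) (x, y) = 0 := by
        intro x
        apply Set.indicator_of_notMem
        rw [hE]
        rintro ⟨-, h0, -⟩
        exact hy h0
      rw [lintegral_congr this, lintegral_zero,
        Set.indicator_of_notMem (by simpa using hy)]
  rw [lintegral_congr key, lintegral_indicator measurableSet_Ici,
    lintegral_const_mul' _ _ ENNReal.ofReal_ne_top]

/-- Null distribution of the spacing statistic: if `(λ₁, λ₂)` has joint density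
`p(ℓ₁,ℓ₂) = Σ_{i,ε} φ(ℓ₁)·q_{i,ε}(ℓ₂)·𝟙{0 ≤ ℓ₂ ≤ ℓ₁}`, where the `q_{i,ε}` are nonnegative
integrable functions, then `S = Φ̄(λ₁)/Φ̄(λ₂)` is uniform on `[0,1]`. -/
theorem spacing_null_uniform {p : ℕ} {Ω : Type*} [MeasurableSpace Ω]
    (P : Measure Ω) [IsProbabilityMeasure P]
    (lam1 lam2 : Ω → ℝ) (hmeas1 : Measurable lam1) (hmeas2 : Measurable lam2)
    (q : Fin p → Bool → ℝ → ℝ)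
    (hq_nonneg : ∀ i ε x, 0 ≤ q i ε x)
    (hq_int : ∀ i ε, MeasureTheory.Integrable (q i ε))
    (hjoint : P.map (fun ω => (lam1 ω, lam2 ω)) =
      (volume : Measure (ℝ × ℝ)).withDensity
        (fun z => ENNReal.ofReal
          (Set.indicator {z : ℝ × ℝ | 0 ≤ z.2 ∧ z.2 ≤ z.1}
            (fun z => ∑ i : Fin p, ∑ ε : Bool, phi z.1 * q i ε z.2) z))) :
    P.map (fun ω => Phibar (lam1 ω) / Phibar (lam2 ω))
      = (volume : Measure ℝ).restrict (Set.Icc 0 1) := by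
  classical
  have hpair : Measurable fun ω => (lam1 ω, lam2 ω) := hmeas1.prodMk hmeas2
  have hg : Measurable fun z : ℝ × ℝ => Phibar z.1 / Phibar z.2 :=
    ((continuous_Phibar.comp continuous_fst).div (continuous_Phibar.comp continuous_snd)
      fun z => (Phibar_pos _).ne').measurable
  set region := {z : ℝ × ℝ | 0 ≤ z.2 ∧ z.2 ≤ z.1} with hregion
  set f : ℝ × ℝ → ℝ := fun z => ∑ i : Fin p, ∑ ε : Bool, phi z.1 * q i ε z.2 with hf
  set μ := (volume : Measure (ℝ × ℝ)).withDensity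
      (fun z => ENNReal.ofReal (region.indicator f z)) with hμ
  have hmap : P.map (fun ω => Phibar (lam1 ω) / Phibar (lam2 ω))
      = μ.map (fun z : ℝ × ℝ => Phibar z.1 / Phibar z.2) := by
    have h := Measure.map_map (μ := P) hg hpair
    rw [hjoint] at h
    exact h.symm
  rw [hmap]
  have hμB : ∀ B : Set (ℝ × ℝ), MeasurableSet B →
      μ B = ∫⁻ z in B ∩ region, ENNReal.ofReal (f z) := by
    intro B hB
    rw [hμ, withDensity_apply _ hB]
    have h1 : (fun z => ENNReal.ofReal (region.indicator f z))
        = region.indicator (fun z => ENNReal.ofReal (f z)) := by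
      funext z
      by_cases hz : z ∈ region <;> simp [hz]
    rw [h1, ← lintegral_indicator hB, Set.indicator_indicator,
      lintegral_indicator (hB.inter region_measurable)]
  have hq2m : ∀ (i : Fin p) (ε : Bool),
      AEMeasurable (fun z : ℝ × ℝ => q i ε z.2) (volume : Measure (ℝ × ℝ)) := by
    intro i ε
    rw [Measure.volume_eq_prod]
    exact ((hq_int i ε).aemeasurable).comp_quasiMeasurePreserving
      Measure.quasiMeasurePreserving_snd
  have hμuniv : μ Set.univ = 1 := by
    rw [← hjoint]
    have : IsProbabilityMeasure (P.map fun ω => (lam1 ω, lam2 ω)) :=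
      Measure.isProbabilityMeasure_map hpair.aemeasurable
    exact measure_univ
  have hsum : ∀ S : Set (ℝ × ℝ), MeasurableSet S →
      ∫⁻ z in S, ENNReal.ofReal (f z)
        = ∑ i : Fin p, ∑ ε : Bool, ∫⁻ z in S, ENNReal.ofReal (phi z.1 * q i ε z.2) := by
    intro S hS
    have h1 : ∀ z : ℝ × ℝ, ENNReal.ofReal (f z)
        = ∑ i : Fin p, ∑ ε : Bool, ENNReal.ofReal (phi z.1 * q i ε z.2) := by
      intro z
      rw [hf]
      rw [ENNReal.ofReal_sum_of_nonneg (fun i _ => Finset.sum_nonneg fun ε _ =>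
        mul_nonneg (phi_pos _).le (hq_nonneg i ε _))]
      exact Finset.sum_congr rfl fun i _ =>
        ENNReal.ofReal_sum_of_nonneg fun ε _ => mul_nonneg (phi_pos _).le (hq_nonneg i ε _)
    have hterm : ∀ (i : Fin p) (ε : Bool),
        AEMeasurable (fun z : ℝ × ℝ => ENNReal.ofReal (phi z.1 * q i ε z.2))
          ((volume : Measure (ℝ × ℝ)).restrict S) := by
      intro i ε
      exact (ENNReal.measurable_ofReal.comp_aemeasurable
        (((continuous_phi.comp continuous_fst).measurable.aemeasurable).mul
          (hq2m i ε))).restrict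
    rw [lintegral_congr h1,
      lintegral_finset_sum' _ (fun i _ => Finset.aemeasurable_fun_sum _ fun ε _ => hterm i ε)]
    exact Finset.sum_congr rfl fun i _ => lintegral_finset_sum' _ fun ε _ => hterm i ε
  set K := ∑ i : Fin p, ∑ ε : Bool,
      ∫⁻ y in Set.Ici (0:ℝ), ENNReal.ofReal (Phibar y) * ENNReal.ofReal (q i ε y) with hK
  have hcalc : ∀ t : ℝ, 0 < t → t ≤ 1 →
      μ {z : ℝ × ℝ | Phibar z.1 / Phibar z.2 ≤ t} = ENNReal.ofReal t * K := by
    intro t ht ht1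
    rw [hμB _ (gset_measurable t), hsum _ ((gset_measurable t).inter region_measurable),
      hK, Finset.mul_sum]
    refine Finset.sum_congr rfl fun i _ => ?_
    rw [Finset.mul_sum]
    exact Finset.sum_congr rfl fun ε _ =>
      calc_aux (q i ε) (hq_nonneg i ε) (hq2m i ε) ht ht1
  have hsub1 : ∀ t : ℝ, 1 ≤ t →
      region ⊆ {z : ℝ × ℝ | Phibar z.1 / Phibar z.2 ≤ t} := by
    intro t ht z hz
    have h1 : Phibar z.1 ≤ Phibar z.2 := Phibar_strictAnti.antitone hz.2
    exact le_trans ((div_le_one (Phibar_pos z.2)).mpr h1) ht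
  have hμregion : μ Set.univ = ∫⁻ z in region, ENNReal.ofReal (f z) := by
    have h := hμB Set.univ MeasurableSet.univ
    rwa [Set.univ_inter] at h
  have hfull : ∀ t : ℝ, 1 ≤ t →
      μ {z : ℝ × ℝ | Phibar z.1 / Phibar z.2 ≤ t} = 1 := by
    intro t ht
    rw [hμB _ (gset_measurable t), Set.inter_eq_self_of_subset_right (hsub1 t ht),
      ← hμregion, hμuniv]
  have hK1 : K = 1 := by
    have h1 := hcalc 1 one_pos le_rfl
    rw [hfull 1 le_rfl] at h1
    simpa using h1.symm
  have hprob : IsProbabilityMeasure (μ.map fun z : ℝ × ℝ => Phibar z.1 / Phibar z.2) := by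
    constructor
    rw [Measure.map_apply hg MeasurableSet.univ, Set.preimage_univ, hμuniv]
  refine Measure.ext_of_Iic _ _ fun t => ?_
  rw [Measure.map_apply hg measurableSet_Iic, Measure.restrict_apply measurableSet_Iic]
  have hIcc : Set.Iic t ∩ Set.Icc 0 1 = Set.Icc 0 (min t 1) := by
    ext x
    simp only [Set.mem_inter_iff, Set.mem_Iic, Set.mem_Icc, le_min_iff]
    tauto
  rw [hIcc, Real.volume_Icc, sub_zero]
  have hpre : (fun z : ℝ × ℝ => Phibar z.1 / Phibar z.2) ⁻¹' Set.Iic t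
      = {z : ℝ × ℝ | Phibar z.1 / Phibar z.2 ≤ t} := rfl
  rw [hpre]
  rcases le_or_gt t 0 with ht | ht
  · have hempty : {z : ℝ × ℝ | Phibar z.1 / Phibar z.2 ≤ t} ∩ region = ∅ := by
      rw [Set.eq_empty_iff_forall_notMem]
      rintro z ⟨h1, h2, h3⟩
      simp only [Set.mem_setOf_eq] at h1
      have hpos : 0 < Phibar z.1 / Phibar z.2 := div_pos (Phibar_pos _) (Phibar_pos _)
      linarith
    rw [hμB _ (gset_measurable t), hempty]
    simp [ENNReal.ofReal_eq_zero, min_le_iff, ht, ENNReal.ofReal_of_nonpos ht]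
  · rcases le_or_gt t 1 with ht1 | ht1
    · rw [hcalc t ht ht1, hK1, mul_one, min_eq_left ht1]
    · rw [hfull t ht1.le, min_eq_right ht1.le]
      simp
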